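/- If the edge flow configuration f on the grid has a vertex v with |inflow(v) − outflow(v)| > 4, then some edge incident to v carries at least 2 units of flow (in absolute value); since edge-firing preserves inflow(v) − outflow(v), the flow-firing process never terminates from such a configuration. -/

import Mathlib

/-- An edge of the grid: `(v, false)` is the horizontal edge from `v` to `v + (1,0)`,
`(v, true)` is the vertical edge from `v` to `v + (0,1)`. -/
abbrev Edge := (ℤ × ℤ) × Bool

/-- The boundary of the square face with lower-left corner `σ`, traversed
counterclockwise, as an edge chain. -/
def bdry (σ : ℤ × ℤ) : Edge → ℤ := fun e =>
  (if e = ((σ.1, σ.2), false) then 1 else 0) +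
  (if e = ((σ.1 + 1, σ.2), true) then 1 else 0) -
  (if e = ((σ.1, σ.2 + 1), false) then 1 else 0) -
  (if e = ((σ.1, σ.2), true) then 1 else 0)

/-- `inflow(v) - outflow(v)` for the edge flow `f`. -/
def netflow (f : Edge → ℤ) (v : ℤ × ℤ) : ℤ :=
  f ((v.1 - 1, v.2), false) + f ((v.1, v.2 - 1), true)
    - f ((v.1, v.2), false) - f ((v.1, v.2), true)

/-- The two faces containing an edge. -/
def facesOf (e : Edge) : (ℤ × ℤ) × (ℤ × ℤ) :=
  if e.2 then (e.1, (e.1.1 - 1, e.1.2)) else (e.1, (e.1.1, e.1.2 - 1))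

/-- Edge-firing: an edge `e` with `|f e| ≥ 2` fires by rerouting one unit of flow
(in the direction of the flow on `e`) around each of the two faces containing `e`. -/
def EStep (f f' : Edge → ℤ) : Prop :=
  ∃ e : Edge, 2 ≤ |f e| ∧
    f' = fun x => f x - (if 0 ≤ f e then 1 else -1) *
      (bdry (facesOf e).1 e * bdry (facesOf e).1 x +
       bdry (facesOf e).2 e * bdry (facesOf e).2 x)


set_option maxHeartbeats 1000000 in
lemma bdry_net (σ v : ℤ × ℤ) :
    bdry σ ((v.1 - 1, v.2), false) + bdry σ ((v.1, v.2 - 1), true)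
      - bdry σ ((v.1, v.2), false) - bdry σ ((v.1, v.2), true) = 0 := by
  simp only [bdry, Prod.mk.injEq, Prod.ext_iff, and_true, and_false, if_false,
    Bool.false_eq_true, Bool.true_eq_false, if_true, add_zero, zero_add, sub_zero]
  split_ifs <;> omega

lemma netflow_sub (f : Edge → ℤ) (v : ℤ × ℤ) (c a b : ℤ) (σ₁ σ₂ : ℤ × ℤ) :
    netflow (fun x => f x - c * (a * bdry σ₁ x + b * bdry σ₂ x)) v = netflow f v := by
  have h1 := bdry_net σ₁ v
  have h2 := bdry_net σ₂ v
  simp only [netflow]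
  ring_nf
  ring_nf at h1 h2
  linear_combination (-c * a) * h1 + (-c * b) * h2

lemma netflow_invariant {f f' : Edge → ℤ} (hs : EStep f f') (v : ℤ × ℤ) :
    netflow f' v = netflow f v := by
  obtain ⟨e, -, rfl⟩ := hs
  exact netflow_sub f v _ _ _ _ _

/-- If `|inflow(v) - outflow(v)|` > 4` then some edge at `v` can fire, and the
flow-firing process never terminates from such a configuration. -/
theorem stmt12 (f : Edge → ℤ) (v : ℤ × ℤ) (h : 4 < |netflow f v|) :
    (∃ e ∈ ({((v.1, v.2), false), ((v.1, v.2), true),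
              ((v.1 - 1, v.2), false), ((v.1, v.2 - 1), true)} : Set Edge),
        2 ≤ |f e|) ∧
    ∀ g : Edge → ℤ, Relation.ReflTransGen EStep f g → ∃ g', EStep g g' := by
  have key : ∀ f : Edge → ℤ, 4 < |netflow f v| →
      ∃ e ∈ ({((v.1, v.2), false), ((v.1, v.2), true),
              ((v.1 - 1, v.2), false), ((v.1, v.2 - 1), true)} : Set Edge),
        2 ≤ |f e| := by
    intro f h
    by_contra hc
    push_neg at hc
    have h1 := hc ((v.1, v.2), false) (by simp)
    have h2 := hc ((v.1, v.2), true) (by simp)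
    have h3 := hc ((v.1 - 1, v.2), false) (by simp)
    have h4 := hc ((v.1, v.2 - 1), true) (by simp)
    rw [abs_lt] at h1 h2 h3 h4
    rcases lt_abs.mp h with h' | h' <;> simp only [netflow] at h' <;> omega
  refine ⟨key f h, ?_⟩
  intro g hg
  have hnet : netflow g v = netflow f v := by
    induction hg with
    | refl => rfl
    | tail _ hs ih => rw [netflow_invariant hs, ih]
  obtain ⟨e, -, he⟩ := key g (hnet ▸ h)
  exact ⟨_, e, he, rfl⟩
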